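/- Let X be a smooth simplicial set. Define the simplicial set X_• by letting X_•(n) be the set of smooth maps Δ^n_• → X (with Δ^n_• carrying the tautological smooth structure), and for a morphism i : [m] → [n] of the simplex category letting X_•(i)(Σ) = Σ ∘ i_•, where i_• : Δ^m_• → Δ^n_• is the map induced by the affine simplicial map i : Δ^m → Δ^n. Then the maps Σ ↦ Σ_* assemble into an isomorphism of simplicial sets X ≅ X_•. -/
import Mathlib


noncomputable section

open scoped BigOperators

/-- The topological `d`-simplex `Δ^d = {x ∈ ℝ^d | ∀ i, 0 ≤ xᵢ and ∑ xᵢ ≤ 1}`. -/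
def TSimplex (d : ℕ) : Set (Fin d → ℝ) :=
  {x | (∀ i, 0 ≤ x i) ∧ ∑ i, x i ≤ 1}

/-- A map `σ : Δ^n → Δ^d` is smooth if it extends to a `C^∞` map from an open
neighborhood of `Δ^n` in `ℝ^n` into `ℝ^d`. -/
def IsSmoothSimplexMap {n d : ℕ} (σ : TSimplex n → TSimplex d) : Prop :=
  ∃ (U : Set (Fin n → ℝ)) (gext : (Fin n → ℝ) → (Fin d → ℝ)),
    IsOpen U ∧ TSimplex n ⊆ U ∧ ContDiffOn ℝ (⊤ : ℕ∞) gext U ∧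
      ∀ x : TSimplex n, gext x.1 = (σ x).1

/-- Barycentric coordinates of a point of `ℝ^m` (with respect to the standard simplex). -/
def bary {m : ℕ} (x : Fin m → ℝ) : Fin (m + 1) → ℝ :=
  Fin.cons (1 - ∑ i, x i) x

theorem bary_nonneg {m : ℕ} {x : Fin m → ℝ} (hx : x ∈ TSimplex m) (i : Fin (m + 1)) :
    0 ≤ bary x i := by
  induction i using Fin.cases with
  | zero => simpa [bary] using sub_nonneg.mpr hx.2
  | succ j => simpa [bary] using hx.1 j

theorem sum_bary {m : ℕ} (x : Fin m → ℝ) : ∑ i, bary x i = 1 := by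
  simp [bary, Fin.sum_cons]

/-- The ambient affine map `ℝ^m → ℝ^n` induced by a monotone map of vertex sets
`φ : [m] → [n]`; it sends the `i`-th vertex of `Δ^m` to the `φ i`-th vertex of `Δ^n`. -/
def affineAux {m n : ℕ} (φ : Fin (m + 1) →o Fin (n + 1)) (x : Fin m → ℝ) : Fin n → ℝ :=
  fun j => ∑ i ∈ Finset.univ.filter (fun i => φ i = j.succ), bary x i

theorem affineAux_mem {m n : ℕ} (φ : Fin (m + 1) →o Fin (n + 1)) (x : TSimplex m) :
    affineAux φ x.1 ∈ TSimplex n := by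
  obtain ⟨x, hx⟩ := x
  have h1 : ∑ i' : Fin (n + 1), ∑ i ∈ Finset.univ.filter (fun i => φ i = i'), bary x i = 1 := by
    rw [Finset.sum_fiberwise]; exact sum_bary x
  have h2 := Fin.sum_univ_succ
    (fun i' : Fin (n + 1) => ∑ i ∈ Finset.univ.filter (fun i => φ i = i'), bary x i)
  have h0 : 0 ≤ ∑ i ∈ Finset.univ.filter (fun i => φ i = (0 : Fin (n + 1))), bary x i :=
    Finset.sum_nonneg fun i _ => bary_nonneg hx i
  constructor
  · intro j
    exact Finset.sum_nonneg fun i _ => bary_nonneg hx i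
  · show ∑ j : Fin n, affineAux φ x j ≤ 1
    have : ∑ j : Fin n, affineAux φ x j
        = ∑ j : Fin n, ∑ i ∈ Finset.univ.filter (fun i => φ i = j.succ), bary x i := rfl
    rw [this]
    rw [h2] at h1
    linarith

/-- The affine simplicial map `Δ^m → Δ^n` induced by a monotone map of vertices. -/
def affineMap {m n : ℕ} (φ : Fin (m + 1) →o Fin (n + 1)) (x : TSimplex m) : TSimplex n :=
  ⟨affineAux φ x.1, affineAux_mem φ x⟩

theorem contDiff_bary {m : ℕ} (i : Fin (m + 1)) :
    ContDiff ℝ (⊤ : ℕ∞) fun x : Fin m → ℝ => bary x i := by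
  induction i using Fin.cases with
  | zero =>
      simp only [bary, Fin.cons_zero]
      exact contDiff_const.sub (ContDiff.sum fun j _ =>
        (ContinuousLinearMap.proj j : (Fin m → ℝ) →L[ℝ] ℝ).contDiff)
  | succ j =>
      simp only [bary, Fin.cons_succ]
      exact (ContinuousLinearMap.proj j : (Fin m → ℝ) →L[ℝ] ℝ).contDiff

theorem contDiff_affineAux {m n : ℕ} (φ : Fin (m + 1) →o Fin (n + 1)) :
    ContDiff ℝ (⊤ : ℕ∞) (affineAux φ) := by
  rw [contDiff_pi]
  intro j
  exact ContDiff.sum fun i _ => contDiff_bary i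

/-- Affine simplicial maps are smooth maps of simplices. -/
theorem isSmooth_affineMap {m n : ℕ} (φ : Fin (m + 1) →o Fin (n + 1)) :
    IsSmoothSimplexMap (affineMap φ) :=
  ⟨Set.univ, affineAux φ, isOpen_univ, Set.subset_univ _,
    (contDiff_affineAux φ).contDiffOn, fun _ => rfl⟩

/-- The identity is a smooth map of simplices. -/
theorem isSmooth_id {n : ℕ} : IsSmoothSimplexMap (id : TSimplex n → TSimplex n) :=
  ⟨Set.univ, id, isOpen_univ, Set.subset_univ _, contDiffOn_id, fun _ => rfl⟩

/-- Constant maps of simplices are smooth. -/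
theorem isSmooth_const {k d : ℕ} (y : TSimplex d) :
    IsSmoothSimplexMap (fun _ : TSimplex k => y) :=
  ⟨Set.univ, fun _ => y.1, isOpen_univ, Set.subset_univ _, contDiffOn_const, fun _ => rfl⟩

/-- Composition of smooth maps of simplices is smooth. -/
theorem IsSmoothSimplexMap.comp {j k n : ℕ} {σ : TSimplex k → TSimplex n}
    {ρ : TSimplex j → TSimplex k} (hσ : IsSmoothSimplexMap σ) (hρ : IsSmoothSimplexMap ρ) :
    IsSmoothSimplexMap (σ ∘ ρ) := by
  obtain ⟨U, g, hUo, hUs, hg, hgval⟩ := hσ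
  obtain ⟨V, h, hVo, hVs, hh, hhval⟩ := hρ
  refine ⟨V ∩ h ⁻¹' U, g ∘ h, ?_, ?_, ?_, ?_⟩
  · exact hh.continuousOn.isOpen_inter_preimage hVo hUo
  · intro x hx
    refine ⟨hVs hx, ?_⟩
    show h x ∈ U
    have hx' : h x = (ρ ⟨x, hx⟩).1 := hhval ⟨x, hx⟩
    rw [hx']
    exact hUs (ρ ⟨x, hx⟩).2
  · exact hg.comp (hh.mono Set.inter_subset_left) fun x hx => hx.2
  · intro x
    show g (h x.1) = (σ (ρ x)).1
    rw [hhval x]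
    exact hgval (ρ x)

theorem affineAux_id {n : ℕ} (x : Fin n → ℝ) :
    affineAux (OrderHom.id : Fin (n + 1) →o Fin (n + 1)) x = x := by
  funext j
  show ∑ i ∈ Finset.univ.filter (fun i : Fin (n + 1) => i = j.succ), bary x i = x j
  rw [Finset.filter_eq']
  simp [bary]

theorem affineMap_id {n : ℕ} :
    affineMap (OrderHom.id : Fin (n + 1) →o Fin (n + 1)) = id := by
  funext x
  exact Subtype.ext (affineAux_id x.1)

theorem bary_affineAux {m n : ℕ} (φ : Fin (m + 1) →o Fin (n + 1)) (x : Fin m → ℝ)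
    (i' : Fin (n + 1)) :
    bary (affineAux φ x) i' = ∑ i ∈ Finset.univ.filter (fun i => φ i = i'), bary x i := by
  induction i' using Fin.cases with
  | zero =>
      have h1 : ∑ i'' : Fin (n + 1), ∑ i ∈ Finset.univ.filter (fun i => φ i = i''), bary x i
          = 1 := by rw [Finset.sum_fiberwise]; exact sum_bary x
      rw [Fin.sum_univ_succ] at h1
      have hz : bary (affineAux φ x) 0 = 1 - ∑ i, affineAux φ x i := rfl
      have hs : ∑ j : Fin n, affineAux φ x j
          = ∑ j : Fin n, ∑ i ∈ Finset.univ.filter (fun i => φ i = j.succ), bary x i := rfl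
      rw [hz, hs]
      linarith
  | succ j =>
      simp [bary, affineAux]

theorem affineAux_comp {j k n : ℕ} (φ : Fin (j + 1) →o Fin (k + 1))
    (ψ : Fin (k + 1) →o Fin (n + 1)) (x : Fin j → ℝ) :
    affineAux (ψ.comp φ) x = affineAux ψ (affineAux φ x) := by
  funext l
  have step1 : affineAux ψ (affineAux φ x) l
      = ∑ i' ∈ Finset.univ.filter (fun i' => ψ i' = l.succ),
          ∑ i ∈ Finset.univ.filter (fun i => φ i = i'), bary x i := by
    unfold affineAux
    exact Finset.sum_congr rfl fun i' _ => bary_affineAux φ x i'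
  rw [step1]
  have step2 : ∑ i' ∈ Finset.univ.filter (fun i' => ψ i' = l.succ),
      ∑ i ∈ Finset.univ.filter (fun i => φ i = i'), bary x i
      = ∑ i' ∈ Finset.univ.filter (fun i' => ψ i' = l.succ),
          ∑ i : Fin (j + 1), if φ i = i' then bary x i else 0 := by
    refine Finset.sum_congr rfl fun i' _ => ?_
    rw [Finset.sum_filter]
  rw [step2, Finset.sum_comm]
  have step3 : ∀ i : Fin (j + 1),
      (∑ i' ∈ Finset.univ.filter (fun i' => ψ i' = l.succ), if φ i = i' then bary x i else 0)
      = if ψ (φ i) = l.succ then bary x i else 0 := by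
    intro i
    rw [Finset.sum_ite_eq]
    simp
  rw [Finset.sum_congr rfl fun i _ => step3 i]
  rw [← Finset.sum_filter]
  rfl

theorem affineMap_comp {j k n : ℕ} (φ : Fin (j + 1) →o Fin (k + 1))
    (ψ : Fin (k + 1) →o Fin (n + 1)) :
    affineMap (ψ.comp φ) = affineMap ψ ∘ affineMap φ := by
  funext x
  exact Subtype.ext (affineAux_comp φ ψ x.1)

/-- A simplicial set: a contravariant functor from the simplex category (encoded via
monotone maps of the vertex sets `[n] = Fin (n+1)`) to sets. -/
structure SSetD where
  obj : ℕ → Type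
  map : ∀ (m n : ℕ), (Fin (m + 1) →o Fin (n + 1)) → obj n → obj m
  map_id : ∀ (n : ℕ) (x : obj n), map n n OrderHom.id x = x
  map_comp : ∀ (j k n : ℕ) (φ : Fin (j + 1) →o Fin (k + 1)) (ψ : Fin (k + 1) →o Fin (n + 1))
      (x : obj n), map j n (ψ.comp φ) x = map j k φ (map k n ψ x)

/-- A smooth simplicial set: a simplicial set `X` together with, for each `n`-simplex
`Σ ∈ X(n)`, a simplicial map `Σ_* = g(Σ) : Δ^n_• → X` (encoded by its values
`g n k Σ σ hσ ∈ X(k)` on the smooth `k`-simplices `σ` of `Δ^n_•`) such that `Σ_*`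
restricts to `Σ` on `Δ^n_simp` (`g_restrict`), is simplicial (`g_simplicial`), and
satisfies push-forward functoriality `(Σ_*(σ))_* = Σ_* ∘ σ_•` (`g_push`). -/
structure SmoothSSet extends SSetD where
  g : ∀ (n k : ℕ), obj n → ∀ σ : TSimplex k → TSimplex n, IsSmoothSimplexMap σ → obj k
  g_simplicial : ∀ (n k m : ℕ) (S : obj n) (σ : TSimplex k → TSimplex n)
      (hσ : IsSmoothSimplexMap σ) (φ : Fin (m + 1) →o Fin (k + 1)),
      g n m S (σ ∘ affineMap φ) (hσ.comp (isSmooth_affineMap φ)) = map m k φ (g n k S σ hσ)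
  g_restrict : ∀ (n k : ℕ) (S : obj n) (φ : Fin (k + 1) →o Fin (n + 1)),
      g n k S (affineMap φ) (isSmooth_affineMap φ) = map k n φ S
  g_push : ∀ (n k m : ℕ) (S : obj n) (σ : TSimplex k → TSimplex n) (hσ : IsSmoothSimplexMap σ)
      (ρ : TSimplex m → TSimplex k) (hρ : IsSmoothSimplexMap ρ),
      g k m (g n k S σ hσ) ρ hρ = g n m S (σ ∘ ρ) (hσ.comp hρ)

/-- A smooth map of smooth simplicial sets: a simplicial map `f` such that
`(f(Σ))_* = f ∘ Σ_*` for every simplex `Σ`. -/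
structure SmoothHom (X Y : SmoothSSet) where
  toFun : ∀ (n : ℕ), X.obj n → Y.obj n
  map_simplicial : ∀ (m n : ℕ) (φ : Fin (m + 1) →o Fin (n + 1)) (x : X.obj n),
      toFun m (X.map m n φ x) = Y.map m n φ (toFun n x)
  map_smooth : ∀ (n k : ℕ) (S : X.obj n) (σ : TSimplex k → TSimplex n)
      (hσ : IsSmoothSimplexMap σ),
      toFun k (X.g n k S σ hσ) = Y.g n k (toFun n S) σ hσ

theorem SmoothHom.ext' {X Y : SmoothSSet} {f g : SmoothHom X Y} (h : f.toFun = g.toFun) :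
    f = g := by
  cases f; cases g; cases h; rfl

/-- The set of smooth `k`-simplices of `Δ^d_•`, i.e. smooth maps `Δ^k → Δ^d`. -/
def SmoothSimplexMapT (k d : ℕ) : Type :=
  {σ : TSimplex k → TSimplex d // IsSmoothSimplexMap σ}

/-- The tautological smooth simplicial set `Δ^d_•`: its `k`-simplices are the smooth maps
`Δ^k → Δ^d`, the simplicial structure maps are given by precomposition with affine
simplicial maps, and the smooth structure is `g(Σ)(σ) = Σ ∘ σ`. -/
def DeltaBullet (d : ℕ) : SmoothSSet where
  obj k := SmoothSimplexMapT k d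
  map m n φ σ := ⟨σ.1 ∘ affineMap φ, σ.2.comp (isSmooth_affineMap φ)⟩
  map_id n σ := Subtype.ext (by show σ.1 ∘ affineMap OrderHom.id = σ.1; rw [affineMap_id]; rfl)
  map_comp j k n φ ψ σ := Subtype.ext
    (by show σ.1 ∘ affineMap (ψ.comp φ) = (σ.1 ∘ affineMap ψ) ∘ affineMap φ
        rw [affineMap_comp, Function.comp_assoc])
  g n k S σ hσ := ⟨S.1 ∘ σ, S.2.comp hσ⟩
  g_simplicial n k m S σ hσ φ := Subtype.ext (Function.comp_assoc S.1 σ (affineMap φ)).symm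
  g_restrict n k S φ := rfl
  g_push n k m S σ hσ ρ hρ := Subtype.ext (Function.comp_assoc S.1 σ ρ)

/-- Composition of smooth maps of smooth simplicial sets (diagrammatic order). -/
def SmoothHom.comp {X Y Z : SmoothSSet} (f : SmoothHom X Y) (g : SmoothHom Y Z) :
    SmoothHom X Z where
  toFun n x := g.toFun n (f.toFun n x)
  map_simplicial m n φ x := by
    show g.toFun m (f.toFun m (X.map m n φ x)) = Z.map m n φ (g.toFun n (f.toFun n x))
    rw [f.map_simplicial, g.map_simplicial]
  map_smooth n k S σ hσ := by
    show g.toFun k (f.toFun k (X.g n k S σ hσ)) = Z.g n k (g.toFun n (f.toFun n S)) σ hσ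
    rw [f.map_smooth, g.map_smooth]

/-- The smooth map `i_• : Δ^m_• → Δ^n_•` induced by the affine simplicial map
`i : Δ^m → Δ^n` of a morphism `i : [m] → [n]` of the simplex category. -/
def iBullet {m n : ℕ} (i : Fin (m + 1) →o Fin (n + 1)) :
    SmoothHom (DeltaBullet m) (DeltaBullet n) where
  toFun k ρ := ⟨affineMap i ∘ ρ.1, (isSmooth_affineMap i).comp ρ.2⟩
  map_simplicial k l φ ρ := Subtype.ext (Function.comp_assoc (affineMap i) ρ.1 (affineMap φ))
  map_smooth k l S σ hσ := Subtype.ext (Function.comp_assoc (affineMap i) S.1 σ)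

/-- The simplicial set `X_•` whose `n`-simplices are the smooth maps `Δ^n_• → X`, with
structure maps given by precomposition `X_•(i)(Σ) = Σ ∘ i_•`. -/
def XBullet (X : SmoothSSet) : SSetD where
  obj n := SmoothHom (DeltaBullet n) X
  map m n i F := (iBullet i).comp F
  map_id n F := SmoothHom.ext' (by
    funext k ρ
    show F.toFun k ((iBullet OrderHom.id).toFun k ρ) = F.toFun k ρ
    congr 1
    exact Subtype.ext (by show affineMap OrderHom.id ∘ ρ.1 = ρ.1; rw [affineMap_id]; rfl))
  map_comp j k n φ ψ F := SmoothHom.ext' (by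
    funext l ρ
    show F.toFun l ((iBullet (ψ.comp φ)).toFun l ρ)
        = F.toFun l ((iBullet ψ).toFun l ((iBullet φ).toFun l ρ))
    congr 1
    exact Subtype.ext (by
      show affineMap (ψ.comp φ) ∘ ρ.1 = affineMap ψ ∘ (affineMap φ ∘ ρ.1)
      rw [affineMap_comp, Function.comp_assoc]))

/-- Auxiliary: the pushforward map `Σ ↦ Σ_*` as a smooth hom `Δ^n_• → X`. -/
def pushF (X : SmoothSSet) (n : ℕ) (S : X.obj n) : SmoothHom (DeltaBullet n) X where
  toFun k σ := X.g n k S σ.1 σ.2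
  map_simplicial m k φ σ := by
    show X.g n m S (σ.1 ∘ affineMap φ) (σ.2.comp (isSmooth_affineMap φ))
        = X.map m k φ (X.g n k S σ.1 σ.2)
    exact X.g_simplicial n k m S σ.1 σ.2 φ
  map_smooth k m S' σ hσ := by
    show X.g n m S (S'.1 ∘ σ) (S'.2.comp hσ) = X.g k m (X.g n k S S'.1 S'.2) σ hσ
    exact (X.g_push n k m S S'.1 S'.2 σ hσ).symm

theorem g_congr (X : SmoothSSet) (n k : ℕ) (S : X.obj n) {σ τ : TSimplex k → TSimplex n}
    (hσ : IsSmoothSimplexMap σ) (hτ : IsSmoothSimplexMap τ) (h : σ = τ) :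
    X.g n k S σ hσ = X.g n k S τ hτ := by subst h; rfl

/-- Let `X` be a smooth simplicial set and let `X_•` be the simplicial
set whose `n`-simplices are the smooth maps `Δ^n_• → X`, with structure maps
`X_•(i)(Σ) = Σ ∘ i_•`.  Then the maps `Σ ↦ Σ_*` assemble into an isomorphism of
simplicial sets `X ≅ X_•`. -/
theorem X_isomorphic_to_XBullet (X : SmoothSSet) :
    ∃ F : ∀ n : ℕ, X.obj n → SmoothHom (DeltaBullet n) X,
      (∀ (n k : ℕ) (S : X.obj n) (σ : SmoothSimplexMapT k n),
          (F n S).toFun k σ = X.g n k S σ.1 σ.2) ∧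
      (∀ (m n : ℕ) (i : Fin (m + 1) →o Fin (n + 1)) (S : X.obj n),
          F m (X.map m n i S) = (XBullet X).map m n i (F n S)) ∧
      (∀ n : ℕ, Function.Bijective (F n)) := by
  refine ⟨pushF X, fun n k S σ => rfl, ?_, ?_⟩
  · intro m n i S
    apply SmoothHom.ext'
    funext k ρ
    show X.g m k (X.map m n i S) ρ.1 ρ.2
        = X.g n k S (affineMap i ∘ ρ.1) ((isSmooth_affineMap i).comp ρ.2)
    rw [← X.g_restrict n m S i]
    exact X.g_push n m k S (affineMap i) (isSmooth_affineMap i) ρ.1 ρ.2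
  · intro n
    constructor
    · intro S T h
      have h1 : (pushF X n S).toFun n ⟨affineMap OrderHom.id, isSmooth_affineMap _⟩
          = (pushF X n T).toFun n ⟨affineMap OrderHom.id, isSmooth_affineMap _⟩ := by rw [h]
      have h2 : ∀ S : X.obj n,
          (pushF X n S).toFun n ⟨affineMap OrderHom.id, isSmooth_affineMap _⟩ = S := by
        intro S
        show X.g n n S (affineMap OrderHom.id) (isSmooth_affineMap _) = S
        rw [X.g_restrict, X.map_id]
      rw [h2, h2] at h1
      exact h1
    · intro G
      refine ⟨G.toFun n ⟨affineMap OrderHom.id, isSmooth_affineMap _⟩, ?_⟩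
      apply SmoothHom.ext'
      funext k σ
      show X.g n k (G.toFun n ⟨affineMap OrderHom.id, isSmooth_affineMap _⟩) σ.1 σ.2
          = G.toFun k σ
      rw [← G.map_smooth n k ⟨affineMap OrderHom.id, isSmooth_affineMap _⟩ σ.1 σ.2]
      congr 1
      exact Subtype.ext (by
        show affineMap OrderHom.id ∘ σ.1 = σ.1
        rw [affineMap_id]; rfl)

end
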